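/- (Rough Gronwall Lemma.) Fix T > 0 and let g : [0,T] → [0,∞) be a path such that for some constants C, L > 0, κ ≥ 1 and some controls ω₁, ω₂ on [0,T] with ω₁ regular, one has g_t − g_s ≤ C (sup_{0 ≤ r ≤ t} g_r) ω₁(s,t)^{1/κ} + ω₂(s,t) for every s ≤ t in [0,T] satisfying ω₁(s,t) ≤ L. Then sup_{0 ≤ t ≤ T} g_t ≤ 2 e^{c ω₁(0,T)} { g_0 + sup_{0 ≤ t ≤ T} ( ω₂(0,t) e^{−c ω₁(0,t)} ) }, where c = max( 1/L , (2Ce²)^κ ). -/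

import Mathlib

open MeasureTheory Set Filter

noncomputable section

/-- The set of partition sums `Σ ‖g(t_i, t_{i+1})‖^p` over partitions of `[s,t]`. -/
def partitionSums {E : Type*} [NormedAddCommGroup E] (p s t : ℝ) (g : ℝ → ℝ → E) : Set ℝ :=
  {x | ∃ (n : ℕ) (u : ℕ → ℝ), u 0 = s ∧ u n = t ∧ (∀ i < n, u i < u (i + 1)) ∧
    x = ∑ i ∈ Finset.range n, ‖g (u i) (u (i + 1))‖ ^ p}

/-- `‖g‖^p_{V̄^p_2([s,t];E)}`, the `p`-th power of the `p`-variation norm. -/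
def pVarSum {E : Type*} [NormedAddCommGroup E] (p s t : ℝ) (g : ℝ → ℝ → E) : ℝ :=
  sSup (partitionSums p s t g)

/-- The `p`-variation norm `‖g‖_{V̄^p_2([s,t];E)}`. -/
def pVarNorm {E : Type*} [NormedAddCommGroup E] (p s t : ℝ) (g : ℝ → ℝ → E) : ℝ :=
  (pVarSum p s t g) ^ (1 / p)

/-- A control on the interval `[a,b]`: nonnegative and superadditive. -/
def IsControl (a b : ℝ) (ω : ℝ → ℝ → ℝ) : Prop :=
  (∀ s t, a ≤ s → s ≤ t → t ≤ b → 0 ≤ ω s t) ∧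
  (∀ s u t, a ≤ s → s ≤ u → u ≤ t → t ≤ b → ω s u + ω u t ≤ ω s t)

/-- A regular control: moreover `ω(s,t) → 0` as `|t - s| → 0`. -/
def IsRegularControl (a b : ℝ) (ω : ℝ → ℝ → ℝ) : Prop :=
  IsControl a b ω ∧
  ∀ ε > 0, ∃ δ > 0, ∀ s t, a ≤ s → s ≤ t → t ≤ b → t - s < δ → ω s t < ε

/-- `g ∈ V^p_2([a,b];E)` : finite `p`-variation whose associated control is regular. -/
def MemVp2 {E : Type*} [NormedAddCommGroup E] (p a b : ℝ) (g : ℝ → ℝ → E) : Prop :=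
  (∀ s t, a ≤ s → s ≤ t → t ≤ b → BddAbove (partitionSums p s t g)) ∧
  IsRegularControl a b (fun s t => pVarSum p s t g)

/-- `y ∈ V^p_1([a,b];E)` for a path `y`. -/
def MemVp1 {E : Type*} [NormedAddCommGroup E] (p a b : ℝ) (y : ℝ → E) : Prop :=
  MemVp2 p a b (fun s t => y t - y s)

private lemma geom_aux (q : ℝ) (h0 : 0 ≤ q) (h1 : q ≤ 15/22) :
    ∀ n : ℕ, ∑ j ∈ Finset.range n, q ^ j ≤ 22/7 := by
  intro n
  induction n with
  | zero => norm_num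
  | succ n ih =>
    rw [geom_sum_succ]
    have hs : 0 ≤ ∑ j ∈ Finset.range n, q ^ j :=
      Finset.sum_nonneg fun j _ => pow_nonneg h0 j
    nlinarith

set_option maxHeartbeats 2000000 in
/-- **Rough Gronwall lemma** (Lemma 2.7 / `lemma:basic-rough-gronwall`): if
`g : [0,T] → [0,∞)` satisfies `δg_{st} ≤ C (sup_{[0,t]} g) ω₁(s,t)^{1/κ} + ω₂(s,t)`
whenever `ω₁(s,t) ≤ L`, with `ω₁` a regular control and `ω₂` a control, then
`sup_{[0,T]} g ≤ 2 e^{c ω₁(0,T)} (g₀ + sup_{t ∈ [0,T]} ω₂(0,t) e^{-c ω₁(0,t)})`,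
where `c = max(1/L, (2Ce²)^κ)`. -/
theorem rough_gronwall (T C L κ : ℝ) (hT : 0 < T) (hC : 0 < C) (hL : 0 < L) (hκ : 1 ≤ κ)
    (g : ℝ → ℝ) (hg : ∀ t ∈ Set.Icc (0 : ℝ) T, 0 ≤ g t)
    (ω₁ ω₂ : ℝ → ℝ → ℝ)
    (hω₁ : IsRegularControl 0 T ω₁) (hω₂ : IsControl 0 T ω₂)
    (hyp : ∀ s t, 0 ≤ s → s ≤ t → t ≤ T → ω₁ s t ≤ L →
      g t - g s ≤ C * sSup (g '' Set.Icc 0 t) * (ω₁ s t) ^ (1 / κ) + ω₂ s t) :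
    sSup (g '' Set.Icc 0 T) ≤
      2 * Real.exp (max (1 / L) ((2 * C * Real.exp 2) ^ κ) * ω₁ 0 T) *
        (g 0 + sSup ((fun t => ω₂ 0 t *
          Real.exp (-(max (1 / L) ((2 * C * Real.exp 2) ^ κ)) * ω₁ 0 t)) '' Set.Icc 0 T)) := by
  classical
  obtain ⟨⟨hω₁0, hω₁add⟩, hω₁reg⟩ := hω₁
  obtain ⟨hω₂0, hω₂add⟩ := hω₂
  have hT0 : (0:ℝ) ≤ T := hT.le
  have hκ0 : (0:ℝ) < κ := lt_of_lt_of_le one_pos hκ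
  have hκ0' : (0:ℝ) < 1/κ := by positivity
  set c := max (1 / L) ((2 * C * Real.exp 2) ^ κ) with hc_def
  have hc_pos : 0 < c := lt_of_lt_of_le (by positivity) (le_max_left _ _)
  have hcL : 1 / c ≤ L := by
    have h1 : 1 / L ≤ c := le_max_left _ _
    rw [div_le_iff₀ hc_pos]
    rw [div_le_iff₀ hL] at h1
    linarith
  have hc_inv_pos : (0:ℝ) < 1/c := by positivity
  -- exponential numeric estimates
  have hexp1 : (2.7182818283 : ℝ) < Real.exp 1 := Real.exp_one_gt_d9
  have hexp2 : (7:ℝ) ≤ Real.exp 2 := by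
    have h : Real.exp 2 = Real.exp 1 * Real.exp 1 := by
      rw [← Real.exp_add]; norm_num
    nlinarith
  have hexphalf : (8/5 : ℝ) ≤ Real.exp (1/2) := by
    have h : Real.exp (1/2) * Real.exp (1/2) = Real.exp 1 := by
      rw [← Real.exp_add]; norm_num
    nlinarith [Real.exp_pos (1/2:ℝ)]
  have hexpneghalf : Real.exp (-(1/2):ℝ) ≤ 5/8 := by
    rw [Real.exp_neg, inv_eq_one_div, div_le_iff₀ (Real.exp_pos _)]
    nlinarith
  -- the key coefficient bound
  have hrpowc : 2 * C * Real.exp 2 ≤ c ^ (1/κ) := by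
    have hb : (0:ℝ) ≤ 2 * C * Real.exp 2 := by positivity
    have h1 : ((2 * C * Real.exp 2) ^ κ) ^ (1/κ) ≤ c ^ (1/κ) :=
      Real.rpow_le_rpow (Real.rpow_nonneg hb κ) (le_max_right _ _) hκ0'.le
    rwa [← Real.rpow_mul hb, mul_one_div_cancel hκ0.ne', Real.rpow_one] at h1
  have hcκ_pos : 0 < c ^ (1/κ) := Real.rpow_pos_of_pos hc_pos _
  have halpha : C * (1/c) ^ (1/κ) ≤ 1/14 := by
    have h2 : (1/c : ℝ) ^ (1/κ) = (c ^ (1/κ))⁻¹ := by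
      rw [one_div, Real.inv_rpow hc_pos.le]
    rw [h2, inv_eq_one_div, mul_one_div, div_le_div_iff₀ hcκ_pos (by norm_num : (0:ℝ) < 14)]
    nlinarith
  -- the fine threshold
  set ε₀ := min (1/c) ((1/(84*C)) ^ κ) with hε₀_def
  have hε₀_pos : 0 < ε₀ := lt_min hc_inv_pos (Real.rpow_pos_of_pos (by positivity) κ)
  have hε₀c : ε₀ ≤ 1/c := min_le_left _ _
  have hε₀L : ε₀ ≤ L := hε₀c.trans hcL
  have hε₀rpow : C * ε₀ ^ (1/κ) ≤ 1/84 := by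
    have hb : (0:ℝ) < 1/(84*C) := by positivity
    have h1 : ε₀ ^ (1/κ) ≤ ((1/(84*C)) ^ κ) ^ (1/κ) :=
      Real.rpow_le_rpow hε₀_pos.le (min_le_right _ _) hκ0'.le
    rw [← Real.rpow_mul hb.le, mul_one_div_cancel hκ0.ne', Real.rpow_one] at h1
    calc C * ε₀ ^ (1/κ) ≤ C * (1/(84*C)) := mul_le_mul_of_nonneg_left h1 hC.le
      _ = 1/84 := by field_simp
  -- facts about S
  have hω₂T_mono : ∀ t, 0 ≤ t → t ≤ T → ω₂ 0 t ≤ ω₂ 0 T := by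
    intro t h0 hT'
    have h1 := hω₂add 0 t T le_rfl h0 hT' le_rfl
    have h2 := hω₂0 t T h0 hT' le_rfl
    linarith
  have hSbdd : BddAbove ((fun t => ω₂ 0 t * Real.exp (-c * ω₁ 0 t)) '' Set.Icc 0 T) := by
    refine ⟨ω₂ 0 T, ?_⟩
    rintro x ⟨t, ⟨ht0, htT⟩, rfl⟩
    have h1 : Real.exp (-c * ω₁ 0 t) ≤ 1 := by
      rw [Real.exp_le_one_iff]
      have := hω₁0 0 t le_rfl ht0 htT
      nlinarith
    have h2 := hω₂0 0 t le_rfl ht0 htT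
    calc ω₂ 0 t * Real.exp (-c * ω₁ 0 t) ≤ ω₂ 0 t * 1 := mul_le_mul_of_nonneg_left h1 h2
      _ ≤ ω₂ 0 T := by rw [mul_one]; exact hω₂T_mono t ht0 htT
  set S := sSup ((fun t => ω₂ 0 t * Real.exp (-c * ω₁ 0 t)) '' Set.Icc 0 T) with hS_def
  have hS0 : 0 ≤ S := by
    have h1 : (0:ℝ) ≤ ω₂ 0 0 * Real.exp (-c * ω₁ 0 0) :=
      mul_nonneg (hω₂0 0 0 le_rfl le_rfl hT0) (Real.exp_pos _).le
    exact h1.trans (le_csSup hSbdd ⟨0, ⟨le_rfl, hT0⟩, rfl⟩)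
  have hSle : ∀ t, 0 ≤ t → t ≤ T → ω₂ 0 t ≤ S * Real.exp (c * ω₁ 0 t) := by
    intro t h0 hT'
    have h1 := le_csSup hSbdd ⟨t, ⟨h0, hT'⟩, rfl⟩
    have h2 := mul_le_mul_of_nonneg_right h1 (Real.exp_pos (c * ω₁ 0 t)).le
    rwa [mul_assoc, ← Real.exp_add, neg_mul, neg_add_cancel, Real.exp_zero, mul_one] at h2
  have hg0 : 0 ≤ g 0 := hg 0 ⟨le_rfl, hT0⟩
  by_cases hbdd : BddAbove (g '' Set.Icc 0 T)
  · -- main (bounded) case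
    set G : ℝ → ℝ := fun t => sSup (g '' Set.Icc 0 t) with hG_def
    have hGbdd : ∀ t, t ≤ T → BddAbove (g '' Set.Icc 0 t) := fun t ht =>
      hbdd.mono (Set.image_mono (f := g) (Set.Icc_subset_Icc_right ht))
    have hle_G : ∀ r t, 0 ≤ r → r ≤ t → t ≤ T → g r ≤ G t := fun r t h0 hrt htT =>
      le_csSup (hGbdd t htT) ⟨r, ⟨h0, hrt⟩, rfl⟩
    have hG0 : ∀ t, 0 ≤ t → t ≤ T → 0 ≤ G t := fun t h0 hT' =>
      hg0.trans (hle_G 0 t le_rfl h0 hT')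
    have hGmono : ∀ a b, 0 ≤ a → a ≤ b → b ≤ T → G a ≤ G b := fun a b h0 hab hbT =>
      csSup_le_csSup (hGbdd b hbT) ⟨g 0, ⟨0, ⟨le_rfl, h0⟩, rfl⟩⟩
        (Set.image_mono (f := g) (Set.Icc_subset_Icc_right hab))
    obtain ⟨δ, hδ_pos, hδ⟩ := hω₁reg ε₀ hε₀_pos
    have hω₁xx : ∀ x, 0 ≤ x → x ≤ T → ω₁ x x = 0 := fun x h0 hxT =>
      le_antisymm (by linarith [hω₁add x x x h0 le_rfl le_rfl hxT]) (hω₁0 x x h0 le_rfl hxT)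
    -- the one-step estimate
    have step : ∀ s : ℝ, ∃ t' : ℝ, 0 ≤ s → s ≤ T →
        (min T (s + δ/2) ≤ t' ∧ t' ≤ T ∧
         (∀ v, t' < v → v ≤ T → 1/c < ω₁ s v) ∧
         G t' ≤ (12/11) * (G s + ω₂ s t')) := by
      intro s
      by_cases hs : 0 ≤ s ∧ s ≤ T
      · obtain ⟨hs0, hsT⟩ := hs
        have hAne : s ∈ {u : ℝ | u ∈ Set.Icc s T ∧ ω₁ s u ≤ 1/c} := by
          refine ⟨⟨le_rfl, hsT⟩, ?_⟩
          rw [hω₁xx s hs0 hsT]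
          positivity
        set A : Set ℝ := {u : ℝ | u ∈ Set.Icc s T ∧ ω₁ s u ≤ 1/c} with hA_def
        have hAbdd : BddAbove A := ⟨T, fun u hu => hu.1.2⟩
        set τ := sSup A with hτ_def
        have hsτ : s ≤ τ := le_csSup hAbdd hAne
        have hτT : τ ≤ T := csSup_le ⟨s, hAne⟩ fun u hu => hu.1.2
        have h0τ : 0 ≤ τ := hs0.trans hsτ
        have hminA : min T (s + δ/2) ∈ A := by
          have h1 : s ≤ min T (s + δ/2) := le_min hsT (by linarith)
          have h2 : min T (s + δ/2) ≤ T := min_le_left _ _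
          refine ⟨⟨h1, h2⟩, le_trans (le_of_lt (hδ s _ hs0 h1 h2 ?_)) hε₀c⟩
          have h3 := min_le_right T (s + δ/2)
          linarith
        have hminτ : min T (s + δ/2) ≤ τ := le_csSup hAbdd hminA
        have hless : ∀ r, s ≤ r → r < τ → ω₁ s r ≤ 1/c := by
          intro r hsr hrτ
          obtain ⟨v, hvA, hrv⟩ := exists_lt_of_lt_csSup ⟨s, hAne⟩ hrτ
          have h1 := hω₁add s r v hs0 hsr hrv.le hvA.1.2
          have h2 := hω₁0 r v (hs0.trans hsr) hrv.le hvA.1.2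
          linarith [hvA.2]
        have hbeyond : ∀ v, τ < v → v ≤ T → 1/c < ω₁ s v := by
          intro v hv hvT
          by_contra h
          push_neg at h
          exact absurd (le_csSup hAbdd ⟨⟨hsτ.trans hv.le, hvT⟩, h⟩) (not_le.mpr hv)
        refine ⟨τ, fun _ _ => ⟨hminτ, hτT, hbeyond, ?_⟩⟩
        have hGτ0 : 0 ≤ G τ := hG0 τ h0τ hτT
        have hGs0 : 0 ≤ G s := hG0 s hs0 hsT
        have hω₂sτ : 0 ≤ ω₂ s τ := hω₂0 s τ hs0 hsτ hτT
        have hsmall : ∀ a b, 0 ≤ a → a ≤ b → b ≤ T → ω₁ a b ≤ ε₀ →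
            C * G τ * ω₁ a b ^ (1/κ) ≤ 1/84 * G τ := by
          intro a b h0 hab hbT hω
          have h1 : ω₁ a b ^ (1/κ) ≤ ε₀ ^ (1/κ) :=
            Real.rpow_le_rpow (hω₁0 a b h0 hab hbT) hω hκ0'.le
          calc C * G τ * ω₁ a b ^ (1/κ) = (C * ω₁ a b ^ (1/κ)) * G τ := by ring
            _ ≤ (C * ε₀ ^ (1/κ)) * G τ :=
              mul_le_mul_of_nonneg_right (mul_le_mul_of_nonneg_left h1 hC.le) hGτ0
            _ ≤ 1/84 * G τ := mul_le_mul_of_nonneg_right hε₀rpow hGτ0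
        have hlt : ∀ r, s ≤ r → r < τ → g r ≤ G s + 1/14 * G τ + ω₂ s r := by
          intro r hsr hrτ
          have hrT : r ≤ T := hrτ.le.trans hτT
          have hr0 : 0 ≤ r := hs0.trans hsr
          have hω : ω₁ s r ≤ 1/c := hless r hsr hrτ
          have h1 : g r - g s ≤ C * G r * ω₁ s r ^ (1 / κ) + ω₂ s r :=
            hyp s r hs0 hsr hrT (hω.trans hcL)
          have hx0 : 0 ≤ ω₁ s r ^ (1/κ) := Real.rpow_nonneg (hω₁0 s r hs0 hsr hrT) _
          have hx1 : ω₁ s r ^ (1/κ) ≤ (1/c) ^ (1/κ) :=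
            Real.rpow_le_rpow (hω₁0 s r hs0 hsr hrT) hω hκ0'.le
          have hGr : G r ≤ G τ := hGmono r τ hr0 hrτ.le hτT
          have hGr0 : 0 ≤ G r := hG0 r hr0 hrT
          have h2 : C * G r * ω₁ s r ^ (1/κ) ≤ 1/14 * G τ := by
            calc C * G r * ω₁ s r ^ (1/κ) ≤ (C * G τ) * ((1/c) ^ (1/κ)) := by
                  apply mul_le_mul (mul_le_mul_of_nonneg_left hGr hC.le) hx1 hx0 (by positivity)
              _ = (C * (1/c) ^ (1/κ)) * G τ := by ring
              _ ≤ 1/14 * G τ := mul_le_mul_of_nonneg_right halpha hGτ0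
          have h3 : g s ≤ G s := hle_G s s hs0 le_rfl hsT
          linarith
        have hkey : ∀ r, s ≤ r → r ≤ τ → g r ≤ G s + 1/12 * G τ + ω₂ s τ := by
          intro r hsr hrτ
          rcases lt_or_eq_of_le hrτ with hlt' | heq
          · have h1 := hlt r hsr hlt'
            have h2 : ω₂ s r ≤ ω₂ s τ := by
              have h3 := hω₂add s r τ hs0 hsr hlt'.le hτT
              have h4 := hω₂0 r τ (hs0.trans hsr) hlt'.le hτT
              linarith
            linarith
          · subst heq
            rcases le_or_gt (τ - δ/2) s with hcase | hcase
            · have hωsr : ω₁ s τ ≤ ε₀ := (hδ s τ hs0 hsτ hτT (by linarith)).le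
              have h1 : g τ - g s ≤ C * G τ * ω₁ s τ ^ (1 / κ) + ω₂ s τ :=
                hyp s τ hs0 hsτ hτT (hωsr.trans hε₀L)
              have h2 := hsmall s τ hs0 hsτ hτT hωsr
              have h3 : g s ≤ G s := hle_G s s hs0 le_rfl hsT
              linarith
            · have hsu : s < τ - δ/2 := hcase
              have huτ : τ - δ/2 < τ := by linarith
              have hu0 : (0:ℝ) ≤ τ - δ/2 := hs0.trans hsu.le
              have huT : τ - δ/2 ≤ T := huτ.le.trans hτT
              have hωur : ω₁ (τ - δ/2) τ ≤ ε₀ :=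
                (hδ (τ - δ/2) τ hu0 huτ.le hτT (by linarith)).le
              have h1 : g τ - g (τ - δ/2) ≤ C * G τ * ω₁ (τ - δ/2) τ ^ (1 / κ) + ω₂ (τ - δ/2) τ :=
                hyp (τ - δ/2) τ hu0 huτ.le hτT (hωur.trans hε₀L)
              have h2 := hsmall (τ - δ/2) τ hu0 huτ.le hτT hωur
              have h3 := hlt (τ - δ/2) hsu.le huτ
              have h5 := hω₂add s (τ - δ/2) τ hs0 hsu.le huτ.le hτT
              linarith
        have hGτle : G τ ≤ G s + 1/12 * G τ + ω₂ s τ := by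
          have hne : (g '' Set.Icc 0 τ).Nonempty := ⟨g 0, 0, ⟨le_rfl, h0τ⟩, rfl⟩
          have : sSup (g '' Set.Icc 0 τ) ≤ G s + 1/12 * G τ + ω₂ s τ := by
            refine csSup_le hne ?_
            rintro x ⟨r, ⟨hr0, hrτ⟩, rfl⟩
            rcases le_or_gt r s with h | h
            · have h1 := hle_G r s hr0 h hsT
              linarith
            · exact hkey r h.le hrτ
          exact this
        linarith only [hGτle, hGτ0, hGs0, hω₂sτ]
      · exact ⟨T, fun h1 h2 => absurd ⟨h1, h2⟩ hs⟩
    choose f hf using step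
    set seq : ℕ → ℝ := fun n => f^[n] 0 with hseq_def
    have hseq0 : seq 0 = 0 := rfl
    have hseq_succ : ∀ n, seq (n+1) = f (seq n) := fun n => Function.iterate_succ_apply' f n 0
    have hmem : ∀ n, 0 ≤ seq n ∧ seq n ≤ T := by
      intro n
      induction n with
      | zero => exact ⟨le_of_eq hseq0.symm, hseq0 ▸ hT0⟩
      | succ n ih =>
        obtain ⟨h0, hT'⟩ := ih
        obtain ⟨hmin, hfT, -, -⟩ := hf (seq n) h0 hT'
        rw [hseq_succ n]
        refine ⟨?_, hfT⟩
        have h1 : (0:ℝ) ≤ min T (seq n + δ/2) := le_min hT0 (by linarith only [h0, hδ_pos])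
        linarith only [h1, hmin]
    have hmono : ∀ n, seq n ≤ seq (n+1) := by
      intro n
      obtain ⟨h0, hT'⟩ := hmem n
      obtain ⟨hmin, -, -, -⟩ := hf (seq n) h0 hT'
      rw [hseq_succ n]
      have h1 : seq n ≤ min T (seq n + δ/2) := le_min hT' (by linarith only [hδ_pos])
      linarith only [h1, hmin]
    have hmono' : ∀ {a b : ℕ}, a ≤ b → seq a ≤ seq b := fun hab =>
      monotone_nat_of_le_succ hmono hab
    have hstrict : ∀ n, seq n < T → seq n < seq (n+1) := by
      intro n hn
      obtain ⟨h0, hT'⟩ := hmem n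
      obtain ⟨hmin, -, -, -⟩ := hf (seq n) h0 hT'
      rw [hseq_succ n]
      have h1 : seq n < min T (seq n + δ/2) := lt_min hn (by linarith only [hδ_pos])
      linarith only [h1, hmin]
    have hprog : ∀ n : ℕ, min T ((n:ℝ) * (δ/2)) ≤ seq n := by
      intro n
      induction n with
      | zero =>
        rw [hseq0]
        simpa using min_le_right T 0
      | succ n ih =>
        obtain ⟨h0, hT'⟩ := hmem n
        obtain ⟨hmin, -, -, -⟩ := hf (seq n) h0 hT'
        rw [hseq_succ n]
        refine le_trans ?_ hmin
        apply le_min (min_le_left _ _)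
        have h4 : (((n+1:ℕ)):ℝ)*(δ/2) = (n:ℝ)*(δ/2) + δ/2 := by push_cast; ring
        rcases le_total T ((n:ℝ) * (δ/2)) with h | h
        · rw [min_eq_left h] at ih
          have h2 := min_le_left T ((((n+1:ℕ)):ℝ) * (δ/2))
          linarith only [ih, h2, hδ_pos]
        · rw [min_eq_right h] at ih
          have h2 := min_le_right T ((((n+1:ℕ)):ℝ) * (δ/2))
          linarith only [ih, h2, h4]
    have hreach : ∃ n, seq n = T := by
      obtain ⟨n, hn⟩ := exists_nat_ge (T / (δ/2))
      refine ⟨n, le_antisymm (hmem n).2 ?_⟩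
      have h1 : T ≤ (n:ℝ) * (δ/2) := by
        rw [div_le_iff₀ (by linarith only [hδ_pos] : (0:ℝ) < δ/2)] at hn
        linarith only [hn]
      have h2 := hprog n
      rwa [min_eq_left h1] at h2
    set N := Nat.find hreach with hN_def
    have hNT : seq N = T := Nat.find_spec hreach
    have hltT : ∀ k, k < N → seq k < T := fun k hk =>
      lt_of_le_of_ne (hmem k).2 (Nat.find_min hreach hk)
    have hN1 : 1 ≤ N := by
      rcases Nat.eq_zero_or_pos N with h | h
      · exfalso
        rw [h, hseq0] at hNT
        exact absurd hNT (ne_of_lt hT)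
      · exact h
    have hpair : ∀ l, l + 2 ≤ N → 1/c < ω₁ (seq l) (seq (l+2)) := by
      intro l hl
      obtain ⟨h0, hT'⟩ := hmem l
      obtain ⟨-, -, hbey, -⟩ := hf (seq l) h0 hT'
      rw [← hseq_succ l] at hbey
      have h1 : seq (l+1) < seq (l+2) := hstrict (l+1) (hltT (l+1) (by omega))
      exact hbey (seq (l+2)) h1 (hmem (l+2)).2
    have hcount : ∀ i j, i + 2*j ≤ N → (j:ℝ) * (1/c) ≤ ω₁ (seq i) (seq (i + 2*j)) := by
      intro i j
      induction j with
      | zero =>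
        intro _
        simpa using hω₁0 (seq i) (seq i) (hmem i).1 le_rfl (hmem i).2
      | succ j ih =>
        intro hij
        have h1 : i + 2*j ≤ N := by omega
        have h2 := ih h1
        have h3 : 1/c < ω₁ (seq (i+2*j)) (seq (i+2*j+2)) := hpair (i+2*j) (by omega)
        have h4 := hω₁add (seq i) (seq (i+2*j)) (seq (i+2*j+2)) (hmem i).1
          (hmono' (by omega)) (hmono' (by omega)) (hmem (i+2*j+2)).2
        have h5 : i + 2*(j+1) = i + 2*j + 2 := by ring
        rw [h5]
        push_cast
        linarith only [h2, h3, h4]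
    have hdecay : ∀ i, i ≤ N → c * ω₁ 0 (seq i) ≤ c * ω₁ 0 T - ((N:ℝ) - i - 1)/2 := by
      intro i hi
      set j := (N - i)/2 with hj_def
      have hj1 : i + 2*j ≤ N := by omega
      have hc1 := hcount i j hj1
      have hc2 : ω₁ (seq i) (seq (i+2*j)) ≤ ω₁ (seq i) T := by
        have h1 := hω₁add (seq i) (seq (i+2*j)) T (hmem i).1 (hmono' (by omega))
          (hmem (i+2*j)).2 le_rfl
        have h2 := hω₁0 (seq (i+2*j)) T (hmem (i+2*j)).1 (hmem (i+2*j)).2 le_rfl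
        linarith only [h1, h2]
      have hc3 := hω₁add 0 (seq i) T le_rfl (hmem i).1 (hmem i).2 le_rfl
      have hc4 : ((N:ℝ) - i - 1) ≤ 2*(j:ℝ) := by
        have h1 : N ≤ 2*j + i + 1 := by omega
        have h2 : (N:ℝ) ≤ 2*(j:ℝ) + i + 1 := by exact_mod_cast h1
        linarith only [h2]
      have hc5 : (j:ℝ) ≤ c * ω₁ (seq i) T := by
        have h6 : c * ((j:ℝ) * (1/c)) = j := by field_simp
        have h7 := mul_le_mul_of_nonneg_left (hc1.trans hc2) hc_pos.le
        rwa [h6] at h7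
      have h8 := mul_le_mul_of_nonneg_left hc3 hc_pos.le
      have h9 : c * (ω₁ 0 (seq i) + ω₁ (seq i) T) = c * ω₁ 0 (seq i) + c * ω₁ (seq i) T := by ring
      rw [h9] at h8
      linarith only [h8, hc4, hc5]
    have hmain : ∀ k, G (seq k) ≤ (12/11:ℝ)^k * g 0 + (12/11) * ω₂ 0 (seq k)
        + (1/11) * ∑ i ∈ Finset.range k, (12/11:ℝ)^(k-i) * ω₂ 0 (seq i) := by
      intro k
      induction k with
      | zero =>
        have h1 : G (seq 0) = g 0 := by
          rw [hseq0]
          show sSup (g '' Set.Icc 0 0) = g 0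
          rw [Set.Icc_self, Set.image_singleton, csSup_singleton]
        rw [h1, hseq0]
        have h2 := hω₂0 0 0 le_rfl le_rfl hT0
        simp only [pow_zero, Finset.range_zero, Finset.sum_empty, mul_zero, add_zero, one_mul]
        linarith only [h2]
      | succ k ih =>
        obtain ⟨h0, hT'⟩ := hmem k
        obtain ⟨-, -, -, hbound⟩ := hf (seq k) h0 hT'
        rw [← hseq_succ k] at hbound
        have hsup : ω₂ 0 (seq k) + ω₂ (seq k) (seq (k+1)) ≤ ω₂ 0 (seq (k+1)) :=
          hω₂add 0 (seq k) (seq (k+1)) le_rfl h0 (hmono k) (hmem (k+1)).2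
        have hsum : ∑ i ∈ Finset.range (k+1), (12/11:ℝ)^(k+1-i) * ω₂ 0 (seq i)
            = (12/11) * ∑ i ∈ Finset.range k, (12/11:ℝ)^(k-i) * ω₂ 0 (seq i)
              + (12/11) * ω₂ 0 (seq k) := by
          rw [Finset.sum_range_succ, Finset.mul_sum]
          congr 1
          · apply Finset.sum_congr rfl
            intro i hi
            have hik : i < k := Finset.mem_range.mp hi
            have h5 : k + 1 - i = (k - i) + 1 := by omega
            rw [h5, pow_succ]
            ring
          · have h6 : k + 1 - k = 1 := by omega
            rw [h6, pow_one]
        rw [hsum, pow_succ]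
        linarith only [ih, hbound, hsup]
    have hfin := hmain N
    rw [hNT] at hfin
    set E := Real.exp (c * ω₁ 0 T) with hE_def
    have hE1 : 1 ≤ E := by
      rw [hE_def, Real.one_le_exp_iff]
      exact mul_nonneg hc_pos.le (hω₁0 0 T le_rfl hT0 le_rfl)
    have hNcast : (1:ℝ) ≤ (N:ℝ) := by exact_mod_cast hN1
    have hNΩ : ((N:ℝ) - 1)/2 ≤ c * ω₁ 0 T := by
      have h1 := hdecay 0 (Nat.zero_le N)
      rw [hseq0, hω₁xx 0 le_rfl hT0, mul_zero] at h1
      push_cast at h1 ⊢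
      linarith only [h1]
    have hρN : (12/11:ℝ)^N ≤ 2 * E := by
      have h1 : (12/11:ℝ) ≤ Real.exp (1/11) := by
        have h := Real.add_one_le_exp (1/11:ℝ)
        linarith only [h]
      have h2 : (12/11:ℝ)^N ≤ Real.exp (1/11) ^ N := pow_le_pow_left₀ (by norm_num) h1 N
      have h3 : Real.exp (1/11) ^ N = Real.exp ((N:ℝ) * (1/11)) := (Real.exp_nat_mul _ N).symm
      have h4 : Real.exp ((N:ℝ)*(1/11))
          = Real.exp (((N:ℝ)-1)/2) * Real.exp ((N:ℝ)*(1/11) - ((N:ℝ)-1)/2) := by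
        rw [← Real.exp_add]
        congr 1
        ring
      have h5 : Real.exp ((N:ℝ)*(1/11) - ((N:ℝ)-1)/2) ≤ 2 := by
        have h6 : (N:ℝ)*(1/11) - ((N:ℝ)-1)/2 ≤ 1/11 := by linarith only [hNcast]
        have h7 : Real.exp ((N:ℝ)*(1/11) - ((N:ℝ)-1)/2) ≤ Real.exp (1/11) :=
          Real.exp_le_exp.mpr h6
        have h8 : Real.exp (1/11:ℝ) ≤ 11/10 := by
          have h9 := Real.add_one_le_exp (-(1/11):ℝ)
          rw [Real.exp_neg] at h9
          have h10 := Real.exp_pos (1/11:ℝ)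
          have h11 : Real.exp (1/11:ℝ) * (Real.exp (1/11:ℝ))⁻¹ = 1 :=
            mul_inv_cancel₀ (ne_of_gt h10)
          nlinarith [h9, h10, h11]
        linarith only [h7, h8]
      have h9 : Real.exp (((N:ℝ)-1)/2) ≤ E := by
        rw [hE_def]
        exact Real.exp_le_exp.mpr hNΩ
      calc (12/11:ℝ)^N ≤ Real.exp ((N:ℝ)*(1/11)) := by rw [← h3]; exact h2
        _ = Real.exp (((N:ℝ)-1)/2) * Real.exp ((N:ℝ)*(1/11) - ((N:ℝ)-1)/2) := h4
        _ ≤ E * 2 :=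
            mul_le_mul h9 h5 (Real.exp_pos ((N:ℝ)*(1/11) - ((N:ℝ)-1)/2)).le (zero_le_one.trans hE1)
        _ = 2 * E := by ring
    have hBN : ω₂ 0 T ≤ S * E := hSle T hT0 le_rfl
    have hSE : 0 ≤ S * E := mul_nonneg hS0 (zero_le_one.trans hE1)
    have hterm : ∀ i ∈ Finset.range N, (12/11:ℝ)^(N-i) * ω₂ 0 (seq i)
        ≤ (S * E) * ((12/11:ℝ)^(N-i) * Real.exp (-(((N:ℝ) - i - 1)/2))) := by
      intro i hi
      have hiN : i < N := Finset.mem_range.mp hi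
      have hBi : ω₂ 0 (seq i) ≤ S * Real.exp (c * ω₁ 0 (seq i)) :=
        hSle (seq i) (hmem i).1 (hmem i).2
      have hd : Real.exp (c * ω₁ 0 (seq i)) ≤ E * Real.exp (-(((N:ℝ) - i - 1)/2)) := by
        rw [hE_def, ← Real.exp_add]
        apply Real.exp_le_exp.mpr
        have h1 := hdecay i hiN.le
        linarith only [h1]
      have hρpos : (0:ℝ) ≤ (12/11:ℝ)^(N-i) := by positivity
      calc (12/11:ℝ)^(N-i) * ω₂ 0 (seq i)
          ≤ (12/11:ℝ)^(N-i) * (S * (E * Real.exp (-(((N:ℝ) - i - 1)/2)))) := by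
            apply mul_le_mul_of_nonneg_left _ hρpos
            exact hBi.trans (mul_le_mul_of_nonneg_left hd hS0)
        _ = (S * E) * ((12/11:ℝ)^(N-i) * Real.exp (-(((N:ℝ) - i - 1)/2))) := by ring
    have hgeo : ∑ i ∈ Finset.range N, (12/11:ℝ)^(N-i) * Real.exp (-(((N:ℝ) - i - 1)/2)) ≤ 24/7 := by
      have hq0 : (0:ℝ) ≤ (12/11) * Real.exp (-(1/2):ℝ) := by positivity
      have hq1 : (12/11) * Real.exp (-(1/2):ℝ) ≤ 15/22 := by nlinarith [hexpneghalf]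
      calc ∑ i ∈ Finset.range N, (12/11:ℝ)^(N-i) * Real.exp (-(((N:ℝ) - i - 1)/2))
          = ∑ j ∈ Finset.range N, (12/11) * ((12/11) * Real.exp (-(1/2):ℝ))^j := by
            rw [← Finset.sum_range_reflect
              (fun j => (12/11:ℝ) * ((12/11) * Real.exp (-(1/2):ℝ))^j) N]
            apply Finset.sum_congr rfl
            intro i hi
            have hiN : i < N := Finset.mem_range.mp hi
            have h1 : N - i = (N - 1 - i) + 1 := by omega
            have e1 : ((N - 1 - i : ℕ):ℝ) = (N:ℝ) - 1 - (i:ℝ) := by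
              have h : (N - 1 - i : ℕ) = N - (i+1) := by omega
              rw [h, Nat.cast_sub (by omega : i+1 ≤ N)]
              push_cast
              ring
            have e2 : -(((N:ℝ) - (i:ℝ) - 1)/2) = ((N - 1 - i : ℕ):ℝ) * (-(1/2)) := by
              rw [e1]; ring
            rw [h1, e2, Real.exp_nat_mul, mul_pow, pow_succ]
            ring
          _ = (12/11) * ∑ j ∈ Finset.range N, ((12/11) * Real.exp (-(1/2):ℝ))^j :=
            (Finset.mul_sum _ _ _).symm
          _ ≤ (12/11) * (22/7) :=
            mul_le_mul_of_nonneg_left (geom_aux _ hq0 hq1 N) (by norm_num)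
          _ ≤ 24/7 := by norm_num
    have hBsum : ∑ i ∈ Finset.range N, (12/11:ℝ)^(N-i) * ω₂ 0 (seq i) ≤ (S*E) * (24/7) := by
      calc ∑ i ∈ Finset.range N, (12/11:ℝ)^(N-i) * ω₂ 0 (seq i)
          ≤ ∑ i ∈ Finset.range N, (S * E) * ((12/11:ℝ)^(N-i) * Real.exp (-(((N:ℝ) - i - 1)/2))) :=
            Finset.sum_le_sum hterm
        _ = (S*E) * ∑ i ∈ Finset.range N, (12/11:ℝ)^(N-i) * Real.exp (-(((N:ℝ) - i - 1)/2)) :=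
            (Finset.mul_sum _ _ _).symm
        _ ≤ (S*E) * (24/7) := mul_le_mul_of_nonneg_left hgeo hSE
    have htm1 : (12/11:ℝ)^N * g 0 ≤ 2*E*(g 0) := mul_le_mul_of_nonneg_right hρN hg0
    show G T ≤ 2 * E * (g 0 + S)
    nlinarith [hfin, htm1, hBN, hBsum, hSE, hE1, hS0]
  · rw [Real.sSup_of_not_bddAbove hbdd]
    have h1 := Real.exp_pos (c * ω₁ 0 T)
    nlinarith

end
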